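/- Let S ⊆ ℕ² be a simplicial affine semigroup with extremal generators n₁, n₂, cone C = L_{ℚ≥0}({n₁,n₂}) ∩ ℕ², and interior int(C) = C minus the two extremal rays ℚ≥0·n₁ ∩ ℕ² and ℚ≥0·n₂ ∩ ℕ². Define int(S) analogously as S minus its elements on the extremal rays. If int(C) \ int(S) is nonempty and finite, then S does not satisfy the combinatorial Cohen-Macaulay condition: there exists a ∈ C \ S with a + n₁ ∈ S and a + n₂ ∈ S. -/

import Mathlib

def toQ (p : ℤ × ℤ) : ℚ × ℚ := ((p.1 : ℚ), (p.2 : ℚ))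
def toR (p : ℤ × ℤ) : ℝ × ℝ := ((p.1 : ℝ), (p.2 : ℝ))
def isNat (p : ℤ × ℤ) : Prop := 0 ≤ p.1 ∧ 0 ≤ p.2
def inCone (n₁ n₂ a : ℤ × ℤ) : Prop :=
  ∃ q₁ q₂ : ℚ, 0 ≤ q₁ ∧ 0 ≤ q₂ ∧ toQ a = q₁ • toQ n₁ + q₂ • toQ n₂
def onRay (n a : ℤ × ℤ) : Prop := ∃ q : ℚ, 0 ≤ q ∧ toQ a = q • toQ n

lemma toQ_add (x y : ℤ × ℤ) : toQ (x + y) = toQ x + toQ y := by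
  simp [toQ, Prod.ext_iff]

theorem stmt3 (S : AddSubmonoid (ℤ × ℤ)) (n₁ n₂ : ℤ × ℤ)
    (hnat : ∀ s ∈ S, isNat s)
    (hind : LinearIndependent ℚ ![toQ n₁, toQ n₂])
    (hn₁ : n₁ ∈ S) (hn₂ : n₂ ∈ S)
    (hcone : ∀ s ∈ S, inCone n₁ n₂ s)
    (hfin : ({a : ℤ × ℤ | isNat a ∧ inCone n₁ n₂ a ∧ ¬ onRay n₁ a ∧ ¬ onRay n₂ a} \
             {a : ℤ × ℤ | a ∈ S ∧ ¬ onRay n₁ a ∧ ¬ onRay n₂ a}).Finite)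
    (hne : ({a : ℤ × ℤ | isNat a ∧ inCone n₁ n₂ a ∧ ¬ onRay n₁ a ∧ ¬ onRay n₂ a} \
            {a : ℤ × ℤ | a ∈ S ∧ ¬ onRay n₁ a ∧ ¬ onRay n₂ a}).Nonempty) :
    ∃ a : ℤ × ℤ, isNat a ∧ inCone n₁ n₂ a ∧ a ∉ S ∧ a + n₁ ∈ S ∧ a + n₂ ∈ S := by
  classical
  have hpair : ∀ s t : ℚ, s • toQ n₁ + t • toQ n₂ = 0 → s = 0 ∧ t = 0 :=
    LinearIndependent.pair_iff.mp hind
  have huniq : ∀ q₁ q₂ r₁ r₂ : ℚ, q₁ • toQ n₁ + q₂ • toQ n₂ = r₁ • toQ n₁ + r₂ • toQ n₂ →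
      q₁ = r₁ ∧ q₂ = r₂ := by
    intro q₁ q₂ r₁ r₂ h
    have h0 : (q₁ - r₁) • toQ n₁ + (q₂ - r₂) • toQ n₂ = 0 := by
      have : (q₁ - r₁) • toQ n₁ + (q₂ - r₂) • toQ n₂ =
          (q₁ • toQ n₁ + q₂ • toQ n₂) - (r₁ • toQ n₁ + r₂ • toQ n₂) := by module
      rw [this, h, sub_self]
    obtain ⟨h1, h2⟩ := hpair _ _ h0
    constructor <;> linarith
  have hn₁0 : n₁ ≠ 0 := by
    intro h
    have : toQ n₁ = 0 := by simp [h, toQ]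
    have := (hpair 1 0 (by simp [this])).1
    norm_num at this
  have hn₂0 : n₂ ≠ 0 := by
    intro h
    have : toQ n₂ = 0 := by simp [h, toQ]
    have := (hpair 0 1 (by simp [this])).2
    norm_num at this
  set f : ℤ × ℤ → ℤ := fun p => p.1 + p.2 with hf
  have hfpos : ∀ n : ℤ × ℤ, n ∈ S → n ≠ 0 → 0 < f n := by
    intro n hnS hn0
    obtain ⟨h1, h2⟩ := hnat n hnS
    rcases lt_or_eq_of_le h1 with h | h
    · have : 0 ≤ n.2 := h2; simp only [hf]; omega
    · rcases lt_or_eq_of_le h2 with h' | h'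
      · simp only [hf]; omega
      · exfalso; exact hn0 (Prod.ext h.symm h'.symm)
  obtain ⟨a, haD, hmax⟩ := Set.Finite.exists_maximalFor f _ hfin hne
  obtain ⟨⟨hanat, hacone, hr1, hr2⟩, hnB⟩ := haD
  have haS : a ∉ S := fun h => hnB ⟨h, hr1, hr2⟩
  obtain ⟨q₁, q₂, hq₁, hq₂, hq⟩ := hacone
  have hnatn₁ := hnat n₁ hn₁
  have hnatn₂ := hnat n₂ hn₂
  -- membership of a + n₁ in A
  have hA₁ : (a + n₁) ∈ {a : ℤ × ℤ | isNat a ∧ inCone n₁ n₂ a ∧ ¬ onRay n₁ a ∧ ¬ onRay n₂ a} := by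
    refine ⟨⟨by have := hanat.1; have := hnatn₁.1; simp; omega,
             by have := hanat.2; have := hnatn₁.2; simp; omega⟩, ?_, ?_, ?_⟩
    · exact ⟨q₁ + 1, q₂, by linarith, hq₂, by rw [toQ_add, hq]; module⟩
    · rintro ⟨q, hq0, h⟩
      rw [toQ_add, hq] at h
      have heq : q₁ • toQ n₁ + q₂ • toQ n₂ = (q - 1) • toQ n₁ + (0:ℚ) • toQ n₂ := by
        have : (q - 1) • toQ n₁ + (0:ℚ) • toQ n₂ = q • toQ n₁ - toQ n₁ := by module
        rw [this, ← h]; abel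
      obtain ⟨e1, e2⟩ := huniq _ _ _ _ heq
      exact hr1 ⟨q₁, hq₁, by rw [hq, e2]; module⟩
    · rintro ⟨q, hq0, h⟩
      rw [toQ_add, hq] at h
      have heq : (q₁ + 1) • toQ n₁ + q₂ • toQ n₂ = (0:ℚ) • toQ n₁ + q • toQ n₂ := by
        have : (q₁ + 1) • toQ n₁ + q₂ • toQ n₂ =
            (q₁ • toQ n₁ + q₂ • toQ n₂ + toQ n₁) := by module
        rw [this, h]; module
      obtain ⟨e1, e2⟩ := huniq _ _ _ _ heq
      linarith
  have hA₂ : (a + n₂) ∈ {a : ℤ × ℤ | isNat a ∧ inCone n₁ n₂ a ∧ ¬ onRay n₁ a ∧ ¬ onRay n₂ a} := by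
    refine ⟨⟨by have := hanat.1; have := hnatn₂.1; simp; omega,
             by have := hanat.2; have := hnatn₂.2; simp; omega⟩, ?_, ?_, ?_⟩
    · exact ⟨q₁, q₂ + 1, hq₁, by linarith, by rw [toQ_add, hq]; module⟩
    · rintro ⟨q, hq0, h⟩
      rw [toQ_add, hq] at h
      have heq : q₁ • toQ n₁ + (q₂ + 1) • toQ n₂ = q • toQ n₁ + (0:ℚ) • toQ n₂ := by
        have : q₁ • toQ n₁ + (q₂ + 1) • toQ n₂ =
            (q₁ • toQ n₁ + q₂ • toQ n₂ + toQ n₂) := by module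
        rw [this, h]; module
      obtain ⟨e1, e2⟩ := huniq _ _ _ _ heq
      linarith
    · rintro ⟨q, hq0, h⟩
      rw [toQ_add, hq] at h
      have heq : q₁ • toQ n₁ + q₂ • toQ n₂ = (0:ℚ) • toQ n₁ + (q - 1) • toQ n₂ := by
        have : (0:ℚ) • toQ n₁ + (q - 1) • toQ n₂ = q • toQ n₂ - toQ n₂ := by module
        rw [this, ← h]; abel
      obtain ⟨e1, e2⟩ := huniq _ _ _ _ heq
      exact hr2 ⟨q₂, hq₂, by rw [hq, e1]; module⟩
  have hfadd : ∀ n : ℤ × ℤ, f (a + n) = f a + f n := by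
    intro n; simp [hf]; ring
  have hS₁ : a + n₁ ∈ S := by
    by_contra h
    have hD : (a + n₁) ∈ ({a : ℤ × ℤ | isNat a ∧ inCone n₁ n₂ a ∧ ¬ onRay n₁ a ∧ ¬ onRay n₂ a} \
        {a : ℤ × ℤ | a ∈ S ∧ ¬ onRay n₁ a ∧ ¬ onRay n₂ a}) :=
      ⟨hA₁, fun hb => h hb.1⟩
    have hlt : f a < f (a + n₁) := by rw [hfadd]; have := hfpos n₁ hn₁ hn₁0; omega
    have := hmax hD (le_of_lt hlt)
    omega
  have hS₂ : a + n₂ ∈ S := by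
    by_contra h
    have hD : (a + n₂) ∈ ({a : ℤ × ℤ | isNat a ∧ inCone n₁ n₂ a ∧ ¬ onRay n₁ a ∧ ¬ onRay n₂ a} \
        {a : ℤ × ℤ | a ∈ S ∧ ¬ onRay n₁ a ∧ ¬ onRay n₂ a}) :=
      ⟨hA₂, fun hb => h hb.1⟩
    have hlt : f a < f (a + n₂) := by rw [hfadd]; have := hfpos n₂ hn₂ hn₂0; omega
    have := hmax hD (le_of_lt hlt)
    omega
  exact ⟨a, hanat, ⟨q₁, q₂, hq₁, hq₂, hq⟩, haS, hS₁, hS₂⟩
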